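/- Let n ≥ 1, let k be an integer with 0 < k < n, and let x ∈ ℝⁿ have pairwise distinct coordinates. For each τ > 0, let ν*(τ) be the unique real number with Σᵢ σ((xᵢ + ν*(τ))/τ) = k. Let a be the k-th largest coordinate of x and b the (k+1)-th largest coordinate of x (so b < a). Then for all sufficiently small τ > 0, one has b < −ν*(τ) < a. -/

import Mathlib

open Finset Filter

/-- The sigmoid function `σ(t) = 1 / (1 + exp (-t))`. -/
noncomputable def sigmoid (t : ℝ) : ℝ := 1 / (1 + Real.exp (-t))

lemma sigmoid_mono : Monotone sigmoid := by
  intro s t hst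
  unfold sigmoid
  have h1 : (0:ℝ) < 1 + Real.exp (-t) := by positivity
  have h2 : Real.exp (-t) ≤ Real.exp (-s) := Real.exp_le_exp.2 (by linarith)
  exact one_div_le_one_div_of_le h1 (by linarith)

lemma sigmoid_zero : sigmoid 0 = 1 / 2 := by
  unfold sigmoid; norm_num

lemma sigmoid_eq : sigmoid = fun t : ℝ => (1 + Real.exp (-t))⁻¹ :=
  funext fun t => by simp [sigmoid, one_div]

lemma sigmoid_tendsto_atTop : Filter.Tendsto sigmoid Filter.atTop (nhds 1) := by
  have h : Filter.Tendsto (fun t : ℝ => Real.exp (-t)) Filter.atTop (nhds 0) :=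
    Real.tendsto_exp_atBot.comp tendsto_neg_atTop_atBot
  have : Filter.Tendsto (fun t : ℝ => 1 / (1 + Real.exp (-t))) Filter.atTop (nhds (1 / (1 + 0))) :=
    Filter.Tendsto.div tendsto_const_nhds (tendsto_const_nhds.add h) (by norm_num)
  rw [sigmoid_eq]
  simpa [one_div] using this

lemma sigmoid_tendsto_atBot : Filter.Tendsto sigmoid Filter.atBot (nhds 0) := by
  have h : Filter.Tendsto (fun t : ℝ => Real.exp (-t)) Filter.atBot Filter.atTop :=
    Real.tendsto_exp_atTop.comp tendsto_neg_atBot_atTop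
  have h2 : Filter.Tendsto (fun t : ℝ => 1 + Real.exp (-t)) Filter.atBot Filter.atTop :=
    tendsto_atTop_add_const_left _ _ h
  have : Filter.Tendsto (fun t : ℝ => (1 + Real.exp (-t))⁻¹) Filter.atBot (nhds 0) :=
    tendsto_inv_atTop_zero.comp h2
  rw [sigmoid_eq]
  simpa using this

/-- Limit of a single sigmoid term as `τ → 0⁺`. -/
lemma sigmoid_term_tendsto (c : ℝ) :
    Filter.Tendsto (fun τ : ℝ => sigmoid (c / τ)) (nhdsWithin 0 (Set.Ioi 0))
      (nhds ((if 0 < c then (1:ℝ) else 0) + (if c = 0 then (1:ℝ)/2 else 0))) := by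
  rcases lt_trichotomy c 0 with hc | hc | hc
  · have hinv : Filter.Tendsto (fun τ : ℝ => τ⁻¹) (nhdsWithin 0 (Set.Ioi 0)) Filter.atTop :=
      tendsto_inv_nhdsGT_zero
    have hdiv : Filter.Tendsto (fun τ : ℝ => c / τ) (nhdsWithin 0 (Set.Ioi 0)) Filter.atBot := by
      have := hinv.const_mul_atTop_of_neg hc
      simpa [div_eq_mul_inv] using this
    have := sigmoid_tendsto_atBot.comp hdiv
    simpa [hc.ne, not_lt.2 hc.le, Function.comp_def] using this
  · subst hc
    simp only [div_eq_mul_inv, zero_mul]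
    simpa [sigmoid_zero] using
      (tendsto_const_nhds : Filter.Tendsto (fun _ : ℝ => sigmoid 0)
        (nhdsWithin 0 (Set.Ioi 0)) (nhds (sigmoid 0)))
  · have hinv : Filter.Tendsto (fun τ : ℝ => τ⁻¹) (nhdsWithin 0 (Set.Ioi 0)) Filter.atTop :=
      tendsto_inv_nhdsGT_zero
    have hdiv : Filter.Tendsto (fun τ : ℝ => c / τ) (nhdsWithin 0 (Set.Ioi 0)) Filter.atTop := by
      have := hinv.const_mul_atTop hc
      simpa [div_eq_mul_inv] using this
    have := sigmoid_tendsto_atTop.comp hdiv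
    simpa [hc, hc.ne', Function.comp_def] using this

/-- Limit of the sum as `τ → 0⁺`. -/
lemma sigmoid_sum_tendsto {n : ℕ} (x : Fin n → ℝ) (c : ℝ) :
    Filter.Tendsto (fun τ : ℝ => ∑ i, sigmoid ((x i - c) / τ)) (nhdsWithin 0 (Set.Ioi 0))
      (nhds (∑ i, ((if c < x i then (1:ℝ) else 0) + (if x i = c then (1:ℝ)/2 else 0)))) := by
  apply tendsto_finset_sum
  intro i _
  have := sigmoid_term_tendsto (x i - c)
  simpa [sub_pos, sub_eq_zero] using this

theorem lml_dual_multiplier_between (n k : ℕ) (hn : 1 ≤ n) (hk0 : 0 < k) (hkn : k < n)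
    (x : Fin n → ℝ) (hdist : Function.Injective x)
    (ν : ℝ → ℝ)
    (hν : ∀ τ : ℝ, 0 < τ → (∑ i, sigmoid ((x i + ν τ) / τ)) = k)
    (a b : ℝ)
    (ha : ∃ i, x i = a ∧ (Finset.univ.filter fun j => a < x j).card = k - 1)
    (hb : ∃ i, x i = b ∧ (Finset.univ.filter fun j => b < x j).card = k) :
    ∀ᶠ τ in nhdsWithin (0 : ℝ) (Set.Ioi 0), b < -ν τ ∧ -ν τ < a := by
  obtain ⟨ia, hia, hcarda⟩ := ha
  obtain ⟨ib, hib, hcardb⟩ := hb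
  -- compute the limit sums
  have hsum : ∀ (c : ℝ) (ic : Fin n), x ic = c →
      (∑ i, ((if c < x i then (1:ℝ) else 0) + (if x i = c then (1:ℝ)/2 else 0)))
        = (Finset.univ.filter fun j => c < x j).card + 1/2 := by
    intro c ic hic
    rw [Finset.sum_add_distrib]
    have h1 : (∑ i, (if c < x i then (1:ℝ) else 0))
        = (Finset.univ.filter fun j => c < x j).card := by
      simp [Finset.sum_ite_eq, Finset.sum_boole]
    have hfilter : (Finset.univ.filter fun j => x j = c) = {ic} := by
      ext j
      simp only [Finset.mem_filter, Finset.mem_univ, true_and, Finset.mem_singleton]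
      constructor
      · intro h; exact hdist (by rw [h, hic])
      · intro h; rw [h, hic]
    have h2 : (∑ i, (if x i = c then (1:ℝ)/2 else 0)) = 1/2 := by
      rw [← Finset.sum_filter, hfilter]; simp
    rw [h1, h2]
  have hla := (sigmoid_sum_tendsto x a).congr' (by rfl)
  rw [hsum a ia hia, hcarda] at hla
  have hlb := (sigmoid_sum_tendsto x b).congr' (by rfl)
  rw [hsum b ib hib, hcardb] at hlb
  have hka : ((k - 1 : ℕ) : ℝ) + 1/2 < k := by
    have : ((k - 1 : ℕ) : ℝ) = (k : ℝ) - 1 := by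
      push_cast [Nat.cast_sub hk0]; ring
    rw [this]; linarith
  have hkb : (k : ℝ) < (k : ℕ) + 1/2 := by linarith
  have hevA : ∀ᶠ τ in nhdsWithin (0:ℝ) (Set.Ioi 0),
      (∑ i, sigmoid ((x i - a) / τ)) < k := hla.eventually_lt_const hka
  have hevB : ∀ᶠ τ in nhdsWithin (0:ℝ) (Set.Ioi 0),
      (k : ℝ) < (∑ i, sigmoid ((x i - b) / τ)) := hlb.eventually_const_lt hkb
  filter_upwards [hevA, hevB, self_mem_nhdsWithin] with τ hA hB hτ
  have hτ0 : (0:ℝ) < τ := hτ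
  constructor
  · -- b < -ν τ, i.e. ν τ < -b.  Otherwise ∑ σ((xᵢ+ντ)/τ) ≥ ∑ σ((xᵢ−b)/τ) > k
    by_contra h
    push_neg at h
    have hle : -b ≤ ν τ := by linarith
    have : (∑ i, sigmoid ((x i - b) / τ)) ≤ ∑ i, sigmoid ((x i + ν τ) / τ) := by
      apply Finset.sum_le_sum
      intro i _
      apply sigmoid_mono
      apply div_le_div_of_nonneg_right _ hτ0.le
      linarith
    rw [hν τ hτ0] at this
    linarith
  · by_contra h
    push_neg at h
    have hle : ν τ ≤ -a := by linarith
    have : (∑ i, sigmoid ((x i + ν τ) / τ)) ≤ ∑ i, sigmoid ((x i - a) / τ) := by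
      apply Finset.sum_le_sum
      intro i _
      apply sigmoid_mono
      apply div_le_div_of_nonneg_right _ hτ0.le
      linarith
    rw [hν τ hτ0] at this
    linarith
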